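/- Backtracking lemma: Let a ≥ 1, b ≥ 0 and let S₁,…,S₆ be the six minimal square roots with parameters a, b. Let X, Y₁,…,Y_n be minimal square roots and let w be a word having both X² and Y₁²⋯Y_n² as suffixes. If |X| > |Y_n|, then |X| > |Y₁⋯Y_n| and Y₁⋯Y_n is a suffix of X. -/

import Mathlib

/-- `S₁ = 0`. -/
def W1 : List Bool := [false]

/-- `S₂ = 010^{a−1}`. -/
def W2 (a : ℕ) : List Bool := false :: true :: List.replicate (a - 1) false

/-- `S₃ = 010^a`. -/
def W3 (a : ℕ) : List Bool := false :: true :: List.replicate a false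

/-- `S₄ = 10^a`. -/
def W4 (a : ℕ) : List Bool := true :: List.replicate a false

/-- `S₅ = 10^{a+1}(10^a)^b`. -/
def W5 (a b : ℕ) : List Bool :=
  (true :: List.replicate (a + 1) false) ++ List.flatten (List.replicate b (W4 a))

/-- `S₆ = 10^{a+1}(10^a)^{b+1}`. -/
def W6 (a b : ℕ) : List Bool :=
  (true :: List.replicate (a + 1) false) ++ List.flatten (List.replicate (b + 1) (W4 a))

def V (a c : ℕ) : List Bool :=
  (true :: List.replicate (a + 1) false) ++ List.flatten (List.replicate c (W4 a))

lemma W5_eq_V (a b : ℕ) : W5 a b = V a b := rfl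
lemma W6_eq_V (a b : ℕ) : W6 a b = V a (b+1) := rfl

/-- letter of `u` at distance `d` from the end (`d = 0` is the last letter). -/
def g (u : List Bool) (d : ℕ) : Bool := u.reverse.getD d false

lemma g_out {u : List Bool} {d : ℕ} (h : u.length ≤ d) : g u d = false := by
  apply List.getD_eq_default
  simpa using h

lemma g_append (u v : List Bool) (d : ℕ) :
    g (u ++ v) d = if d < v.length then g v d else g u (d - v.length) := by
  unfold g
  rw [List.reverse_append]
  split
  · exact List.getD_append _ _ _ _ (by simpa)
  · rw [List.getD_append_right _ _ _ _ (by simp; omega)]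
    simp

lemma g_eq_of_suffix {u v : List Bool} (h : u <:+ v) {d : ℕ} (hd : d < u.length) :
    g u d = g v d := by
  obtain ⟨t, rfl⟩ := h
  rw [g_append]
  simp [hd]

lemma suffix_of_ext {u v : List Bool} (hl : u.length ≤ v.length)
    (h : ∀ d < u.length, g u d = g v d) : u <:+ v := by
  rw [← List.reverse_prefix, List.prefix_iff_eq_take]
  apply List.ext_getElem
  · simp; omega
  · intro i h1 h2
    rw [List.getElem_take]
    have hi : i < u.length := by simpa using h1
    have := h i hi
    unfold g at this
    rwa [List.getD_eq_getElem _ _ (by simpa using hi),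
      List.getD_eq_getElem _ _ (by simp; omega)] at this

lemma length_join_sq (L : List (List Bool)) :
    ((L.map fun Y => Y ++ Y).flatten).length = 2 * L.flatten.length := by
  induction L with
  | nil => simp
  | cons x L ih => simp [ih]; ring

lemma rep_getD (n d : ℕ) (t : List Bool) :
    (List.replicate n false ++ t).getD d false = if d < n then false else t.getD (d - n) false := by
  split
  · rw [List.getD_append _ _ _ _ (by simpa)]; simp
  · rw [List.getD_append_right _ _ _ _ (by simp; omega)]; simp

-- reverses
lemma rev_W2 (a : ℕ) : (W2 a).reverse = List.replicate (a-1) false ++ [true, false] := by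
  simp [W2]
lemma rev_W3 (a : ℕ) : (W3 a).reverse = List.replicate a false ++ [true, false] := by
  simp [W3]
lemma rev_W4 (a : ℕ) : (W4 a).reverse = List.replicate a false ++ [true] := by
  simp [W4]

lemma len_W1 : W1.length = 1 := rfl
lemma len_W2 {a : ℕ} (ha : 1 ≤ a) : (W2 a).length = a + 1 := by simp [W2]; omega
lemma len_W3 (a : ℕ) : (W3 a).length = a + 2 := by simp [W3]
lemma len_W4 (a : ℕ) : (W4 a).length = a + 1 := by simp [W4]
lemma len_V (a c : ℕ) : (V a c).length = (c+1)*(a+1)+1 := by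
  simp [V, List.length_flatten, len_W4]
  ring

lemma g_W1 (d : ℕ) : g W1 d = false := by
  unfold g W1
  cases d <;> simp

lemma g_W2 {a : ℕ} (ha : 1 ≤ a) (d : ℕ) : g (W2 a) d = true ↔ d = a - 1 := by
  unfold g
  rw [rev_W2, rep_getD]
  split
  · simp; omega
  · rcases Nat.lt_or_ge d (a+1) with h | h
    · have : d - (a-1) = 0 ∨ d - (a-1) = 1 := by omega
      rcases this with h2 | h2 <;> rw [h2] <;> simp <;> omega
    · rw [List.getD_eq_default _ _ (by simp; omega)]
      simp; omega

lemma g_W3 (a : ℕ) (d : ℕ) : g (W3 a) d = true ↔ d = a := by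
  unfold g
  rw [rev_W3, rep_getD]
  split
  · simp; omega
  · rcases Nat.lt_or_ge d (a+2) with h | h
    · have : d - a = 0 ∨ d - a = 1 := by omega
      rcases this with h2 | h2 <;> rw [h2] <;> simp <;> omega
    · rw [List.getD_eq_default _ _ (by simp; omega)]
      simp; omega

lemma g_W4 (a : ℕ) (d : ℕ) : g (W4 a) d = true ↔ d = a := by
  unfold g
  rw [rev_W4, rep_getD]
  split
  · simp; omega
  · rcases Nat.lt_or_ge d (a+1) with h | h
    · have h2 : d - a = 0 := by omega
      rw [h2]; simp; omega
    · rw [List.getD_eq_default _ _ (by simp; omega)]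
      simp; omega
lemma V_succ (a c : ℕ) : V a (c+1) = V a c ++ W4 a := by
  unfold V
  rw [List.replicate_succ' (n := c) (a := W4 a)]
  simp

lemma V_zero (a : ℕ) : V a 0 = true :: List.replicate (a+1) false := by
  simp [V]

-- arithmetic helpers
lemma Hmul {i j m : ℕ} (h : i ≤ j) : i * m ≤ j * m := Nat.mul_le_mul_right m h

lemma Hpos {i a : ℕ} (h : 1 ≤ i) : a+1 ≤ i*(a+1) := by
  have := Hmul (m := a+1) h
  simpa using this

lemma Hu {a i j r r' : ℕ} (hr : r ≤ a) (hr' : r' ≤ a)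
    (h : i*(a+1)+r = j*(a+1)+r') : i = j ∧ r = r' := by
  have h1 : (i*(a+1)+r) / (a+1) = i := by
    rw [mul_comm, Nat.mul_add_div (by omega), Nat.div_eq_of_lt (by omega)]
    omega
  have h2 : (j*(a+1)+r') / (a+1) = j := by
    rw [mul_comm, Nat.mul_add_div (by omega), Nat.div_eq_of_lt (by omega)]
    omega
  have hij : i = j := by rw [← h1, ← h2, h]
  constructor
  · exact hij
  · subst hij; omega

lemma g_V {a : ℕ} (ha : 1 ≤ a) (c : ℕ) (d : ℕ) :
    g (V a c) d = true ↔ ((∃ i, i < c ∧ d = i*(a+1)+a) ∨ d = c*(a+1)+(a+1)) := by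
  induction c generalizing d with
  | zero =>
    rw [V_zero]
    unfold g
    simp only [List.reverse_cons]
    rw [List.reverse_replicate, rep_getD]
    constructor
    · intro h
      right
      split at h
      · simp at h
      · rcases Nat.lt_or_ge d (a+2) with h2 | h2
        · have h3 : d - (a+1) = 0 := by omega
          rw [h3] at h
          simp at h
          omega
        · rw [List.getD_eq_default _ _ (by simp; omega)] at h
          simp at h
    · rintro (⟨i, hi, _⟩ | rfl)
      · omega
      · rw [if_neg (by omega)]
        have : 0*(a+1)+(a+1) - (a+1) = 0 := by omega
        rw [this]; rfl
  | succ c ih =>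
    rw [V_succ, g_append, len_W4]
    split
    · rename_i hd
      rw [g_W4]
      constructor
      · intro h
        exact Or.inl ⟨0, by omega, by omega⟩
      · rintro (⟨i, hi, rfl⟩ | h)
        · rcases Nat.eq_zero_or_pos i with rfl | hi1
          · omega
          · have := Hpos (a := a) hi1
            omega
        · have h2 : (c+1)*(a+1) = c*(a+1)+(a+1) := by ring
          omega
    · rename_i hd
      push_neg at hd
      rw [ih]
      constructor
      · rintro (⟨i, hi, h⟩ | h)
        · refine Or.inl ⟨i+1, by omega, ?_⟩
          rw [Nat.succ_mul]
          omega
        · right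
          rw [Nat.succ_mul]
          omega
      · rintro (⟨i, hi, h⟩ | h)
        · rcases Nat.eq_zero_or_pos i with rfl | hi1
          · omega
          · obtain ⟨i', rfl⟩ := Nat.exists_eq_add_of_le hi1
            refine Or.inl ⟨i', by omega, ?_⟩
            rw [show 1 + i' = i' + 1 from by omega, Nat.succ_mul] at h
            omega
        · right
          rw [Nat.succ_mul] at h
          omega

/-- positions of `1`s (distance from end) in `V a c ++ V a c`. -/
def O2 (a c d : ℕ) : Prop :=
  (∃ i, i < c ∧ d = i*(a+1)+a) ∨ (∃ i, c+1 ≤ i ∧ i ≤ 2*c+1 ∧ d = i*(a+1)) ∨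
    d = (2*c+2)*(a+1)+1

lemma g_VV {a : ℕ} (ha : 1 ≤ a) (c : ℕ) (d : ℕ) :
    g (V a c ++ V a c) d = true ↔ O2 a c d := by
  rw [g_append, len_V]
  unfold O2
  split
  · rename_i hd
    rw [g_V ha]
    constructor
    · rintro (⟨i, hi, rfl⟩ | h)
      · exact Or.inl ⟨i, hi, rfl⟩
      · refine Or.inr (Or.inl ⟨c+1, by omega, by omega, ?_⟩)
        rw [Nat.succ_mul]
        omega
    · rintro (⟨i, hi, rfl⟩ | ⟨i, hi1, hi2, rfl⟩ | rfl)
      · exact Or.inl ⟨i, hi, rfl⟩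
      · right
        have h1 : i = c + 1 := by
          by_contra hc
          have h2 := Hmul (m := a+1) (show c+2 ≤ i by omega)
          have h3 : (c+2)*(a+1) = c*(a+1)+2*(a+1) := by ring
          have h4 : (c+1)*(a+1) = c*(a+1)+(a+1) := by ring
          omega
        subst h1
        rw [Nat.succ_mul]
      · exfalso
        have h3 : (2*c+2)*(a+1) = c*(a+1)+c*(a+1)+2*(a+1) := by ring
        have h4 : (c+1)*(a+1) = c*(a+1)+(a+1) := by ring
        omega
  · rename_i hd
    push_neg at hd
    rw [g_V ha]
    constructor
    · rintro (⟨i, hi, h⟩ | h)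
      · refine Or.inr (Or.inl ⟨c+2+i, by omega, by omega, ?_⟩)
        have h2 : (c+2+i)*(a+1) = (c+1)*(a+1)+1 + (i*(a+1)+a) := by ring
        omega
      · refine Or.inr (Or.inr ?_)
        have h2 : (2*c+2)*(a+1)+1 = (c+1)*(a+1)+1 + (c*(a+1)+(a+1)) := by ring
        omega
    · rintro (⟨i, hi, rfl⟩ | ⟨i, hi1, hi2, rfl⟩ | rfl)
      · exfalso
        have h2 := Hmul (m := a+1) (show i+1 ≤ c+1 by omega)
        have h3 : (i+1)*(a+1) = i*(a+1)+(a+1) := by ring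
        have h4 : (c+1)*(a+1) = c*(a+1)+(a+1) := by ring
        omega
      · rcases Nat.lt_or_ge i (c+2) with h1 | h1
        · exfalso
          have h2 : i = c+1 := by omega
          subst h2
          omega
        · obtain ⟨i', rfl⟩ := Nat.exists_eq_add_of_le h1
          refine Or.inl ⟨i', by omega, ?_⟩
          have h2 : (c+2+i')*(a+1) = (c+1)*(a+1)+1 + (i'*(a+1)+a) := by ring
          omega
      · right
        have h2 : (2*c+2)*(a+1)+1 = (c+1)*(a+1)+1 + (c*(a+1)+(a+1)) := by ring
        omega

-- squares of small words
lemma g_W1sq (d : ℕ) : g (W1 ++ W1) d = false := by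
  rw [g_append]
  split <;> simp [g_W1]

lemma g_W2sq {a : ℕ} (ha : 1 ≤ a) (d : ℕ) :
    g (W2 a ++ W2 a) d = true ↔ d = a - 1 ∨ d = 2*a := by
  rw [g_append, len_W2 ha]
  split
  · rw [g_W2 ha]; omega
  · rw [g_W2 ha]; omega

lemma g_W3sq (a : ℕ) (d : ℕ) :
    g (W3 a ++ W3 a) d = true ↔ d = a ∨ d = 2*a+2 := by
  rw [g_append, len_W3]
  split
  · rw [g_W3]; omega
  · rw [g_W3]; omega

lemma g_W4sq (a : ℕ) (d : ℕ) :
    g (W4 a ++ W4 a) d = true ↔ d = a ∨ d = 2*a+1 := by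
  rw [g_append, len_W4]
  split
  · rw [g_W4]; omega
  · rw [g_W4]; omega

lemma transfer {x y : Bool} {P Q : Prop} (h : x = y) (hx : x = true ↔ P) (hy : y = true ↔ Q) :
    P ↔ Q := by subst h; rw [← hx, hy]
lemma word_ne_nil {a b : ℕ} {Y : List Bool}
    (hY : Y ∈ ({W1, W2 a, W3 a, W4 a, W5 a b, W6 a b} : Set (List Bool))) : Y ≠ [] := by
  simp only [Set.mem_insert_iff, Set.mem_singleton_iff] at hY
  rcases hY with rfl|rfl|rfl|rfl|rfl|rfl <;> simp [W1,W2,W3,W4,W5,W6]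

lemma core {a b : ℕ} {X w : List Bool} (hXw : X ++ X <:+ w)
    (P : List Bool → Prop) (hbase : P [])
    (hconcl : ∀ s, P s → s.length < X.length ∧ s <:+ X)
    (hstep : ∀ s Y, P s → Y ∈ ({W1, W2 a, W3 a, W4 a, W5 a b, W6 a b} : Set (List Bool)) →
        (s.length = 0 → Y.length < X.length) →
        (∀ d, d < min (2*Y.length) (2*X.length - 2*s.length) →
           g (Y ++ Y) d = g (X ++ X) (d + 2*s.length)) → P (Y ++ s)) :
    ∀ Ys : List (List Bool),
      (∀ Y ∈ Ys, Y ∈ ({W1, W2 a, W3 a, W4 a, W5 a b, W6 a b} : Set (List Bool))) →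
      ((Ys.map fun Y => Y ++ Y).flatten <:+ w) →
      (∀ h : Ys ≠ [], (Ys.getLast h).length < X.length) → P Ys.flatten := by
  intro Ys
  induction Ys with
  | nil => intro _ _ _; simpa using hbase
  | cons Y Ys' ih =>
    intro hmem hsq hlast
    have hmem' : ∀ Z ∈ Ys', Z ∈ ({W1, W2 a, W3 a, W4 a, W5 a b, W6 a b} : Set (List Bool)) :=
      fun Z hZ => hmem Z (List.mem_cons_of_mem _ hZ)
    have hsqc : (Y ++ Y) ++ (Ys'.map fun Z => Z ++ Z).flatten <:+ w := by
      simpa using hsq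
    have hsq' : ((Ys'.map fun Z => Z ++ Z).flatten <:+ w) :=
      (List.suffix_append _ _).trans hsqc
    have hlast' : ∀ h : Ys' ≠ [], (Ys'.getLast h).length < X.length := by
      intro h
      have h2 := hlast (by simp)
      rwa [List.getLast_cons h] at h2
    have hPs := ih hmem' hsq' hlast'
    have hlen := (hconcl _ hPs).1
    have hguard : Ys'.flatten.length = 0 → Y.length < X.length := by
      intro h0
      have hnil : Ys' = [] := by
        cases Ys' with
        | nil => rfl
        | cons Z Zs =>
          exfalso
          have hZ : Z = [] := by
            have := List.flatten_eq_nil_iff.mp (List.eq_nil_of_length_eq_zero h0)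
            exact this Z (by simp)
          exact word_ne_nil (hmem' Z (by simp)) hZ
      subst hnil
      simpa using hlast (by simp)
    have hcmp : ∀ d, d < min (2*Y.length) (2*X.length - 2*Ys'.flatten.length) →
        g (Y ++ Y) d = g (X ++ X) (d + 2*Ys'.flatten.length) := by
      intro d hd
      have hdY : d < 2*Y.length := lt_of_lt_of_le hd (min_le_left _ _)
      have hdX : d < 2*X.length - 2*Ys'.flatten.length := lt_of_lt_of_le hd (min_le_right _ _)
      have hjl : ((Ys'.map fun Z => Z ++ Z).flatten).length = 2*Ys'.flatten.length :=
        length_join_sq _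
      have e1 : g ((Y++Y) ++ (Ys'.map fun Z => Z ++ Z).flatten) (d + 2*Ys'.flatten.length)
          = g (Y++Y) d := by
        rw [g_append, hjl, if_neg (by omega)]
        congr 1
        omega
      have e2 : g ((Y++Y) ++ (Ys'.map fun Z => Z ++ Z).flatten) (d + 2*Ys'.flatten.length)
          = g w (d + 2*Ys'.flatten.length) :=
        g_eq_of_suffix hsqc (by rw [List.length_append, hjl, List.length_append]; omega)
      have e3 : g (X++X) (d + 2*Ys'.flatten.length) = g w (d + 2*Ys'.flatten.length) :=
        g_eq_of_suffix hXw (by rw [List.length_append]; omega)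
      rw [← e1, e2, e3]
    have := hstep _ Y hPs (hmem Y (by simp)) hguard hcmp
    simpa using this
lemma probe_false {u v : List Bool} {d e : ℕ} (h : g u d = g v e) (hu : g u d = false)
    {Q : Prop} (hv : g v e = true ↔ Q) : ¬ Q := by
  intro hq
  rw [hv.mpr hq, hu] at h
  exact Bool.false_ne_true h

lemma rep_suffix {j n : ℕ} (h : j ≤ n) :
    (List.replicate j false) <:+ (List.replicate n false) :=
  ⟨List.replicate (n-j) false, by rw [← List.replicate_add]; congr 1; omega⟩

lemma suffix_cons_ext {u v : List Bool} (x : Bool) (h : u <:+ v) : u <:+ x :: v :=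
  h.trans (List.suffix_cons x v)

lemma len_V_ge {a e : ℕ} : a + 2 ≤ (V a e).length := by
  rw [len_V]
  have := Hpos (a := a) (show 1 ≤ e+1 by omega)
  omega

-- refute Y = V a e against X = W2 a at any state j with 2j+1 ≤ a
lemma no_V_W2 {a : ℕ} (ha : 1 ≤ a) {e j : ℕ} (hj : 2*j+1 ≤ a)
    (hcmp : ∀ d, d < min (2*(V a e).length) (2*(a+1) - 2*j) →
      g (V a e ++ V a e) d = g (W2 a ++ W2 a) (d + 2*j)) : False := by
  have hlen := len_V_ge (a := a) (e := e)
  have h := hcmp (a-1-2*j) (by omega)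
  have hx : g (W2 a ++ W2 a) ((a-1-2*j) + 2*j) = true := by
    rw [g_W2sq ha]
    omega
  rw [hx] at h
  have ho : O2 a e (a-1-2*j) := (g_VV ha e _).mp h
  rcases ho with ⟨i, hi, heq⟩ | ⟨i, hi1, hi2, heq⟩ | heq
  · omega
  · have := Hpos (a := a) (show 1 ≤ i by omega)
    omega
  · have := Hpos (a := a) (show 1 ≤ 2*e+2 by omega)
    omega

lemma step_W2 {a b : ℕ} (ha : 1 ≤ a) (s Y : List Bool)
    (hP : ∃ j, s = List.replicate j false ∧ 2*j+1 ≤ a)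
    (hY : Y ∈ ({W1, W2 a, W3 a, W4 a, W5 a b, W6 a b} : Set (List Bool)))
    (hguard : s.length = 0 → Y.length < (W2 a).length)
    (hcmp : ∀ d, d < min (2*Y.length) (2*(W2 a).length - 2*s.length) →
      g (Y ++ Y) d = g (W2 a ++ W2 a) (d + 2*s.length)) :
    ∃ j, Y ++ s = List.replicate j false ∧ 2*j+1 ≤ a := by
  obtain ⟨j, rfl, hj⟩ := hP
  simp only [List.length_replicate, len_W2 ha] at hguard hcmp
  simp only [Set.mem_insert_iff, Set.mem_singleton_iff] at hY
  rcases hY with rfl|rfl|rfl|rfl|rfl|rfl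
  · -- W1
    have n0 := probe_false (hcmp 0 (by simp [len_W1]; omega)) (g_W1sq 0) (g_W2sq ha _)
    have n1 := probe_false (hcmp 1 (by simp [len_W1]; omega)) (g_W1sq 1) (g_W2sq ha _)
    refine ⟨j+1, by simp [W1, List.replicate_succ], by omega⟩
  · -- W2
    exfalso
    have h := transfer (hcmp (a-1) (by rw [len_W2 ha]; omega)) (g_W2sq ha _) (g_W2sq ha _)
    have : a-1+2*j = a-1 ∨ a-1+2*j = 2*a := h.mp (by omega)
    have hj0 : j = 0 := by omega
    subst hj0
    have h1 := hguard (by simp)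
    rw [len_W2 ha] at h1
    omega
  · -- W3
    exfalso
    have h := transfer (hcmp a (by rw [len_W3]; omega)) (g_W3sq a _) (g_W2sq ha _)
    have : a+2*j = a-1 ∨ a+2*j = 2*a := h.mp (by omega)
    omega
  · -- W4
    exfalso
    have h := transfer (hcmp a (by rw [len_W4]; omega)) (g_W4sq a _) (g_W2sq ha _)
    have : a+2*j = a-1 ∨ a+2*j = 2*a := h.mp (by omega)
    omega
  · exact absurd (no_V_W2 ha hj (by rw [W5_eq_V] at hcmp; exact hcmp)) (by simp)
  · exact absurd (no_V_W2 ha hj (by rw [W6_eq_V] at hcmp; exact hcmp)) (by simp)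

-- refute Y = V a e against X = W3/W4-type: X² ones at {a, 2a+z}; gives j = 0
lemma no_V_W34 {a : ℕ} (ha : 1 ≤ a) {e j L : ℕ} (hj : 2*j ≤ a) (hj1 : 1 ≤ j) (hL : a+1 ≤ L)
    {XX : List Bool}
    (hXX : ∀ d, g XX d = true ↔ (d = a ∨ d = 2*a + L - a))
    (hcmp : ∀ d, d < min (2*(V a e).length) (2*L - 2*j) →
      g (V a e ++ V a e) d = g XX (d + 2*j)) : False := by
  have hlen := len_V_ge (a := a) (e := e)
  have h := hcmp (a-2*j) (by omega)
  have hx : g XX ((a-2*j) + 2*j) = true := by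
    rw [hXX]
    omega
  rw [hx] at h
  have ho : O2 a e (a-2*j) := (g_VV ha e _).mp h
  rcases ho with ⟨i, hi, heq⟩ | ⟨i, hi1, hi2, heq⟩ | heq
  · omega
  · have := Hpos (a := a) (show 1 ≤ i by omega)
    omega
  · have := Hpos (a := a) (show 1 ≤ 2*e+2 by omega)
    omega

lemma step_W3 {a b : ℕ} (ha : 1 ≤ a) (s Y : List Bool)
    (hP : ∃ j, s = List.replicate j false ∧ 2*j ≤ a)
    (hY : Y ∈ ({W1, W2 a, W3 a, W4 a, W5 a b, W6 a b} : Set (List Bool)))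
    (hguard : s.length = 0 → Y.length < (W3 a).length)
    (hcmp : ∀ d, d < min (2*Y.length) (2*(W3 a).length - 2*s.length) →
      g (Y ++ Y) d = g (W3 a ++ W3 a) (d + 2*s.length)) :
    ∃ j, Y ++ s = List.replicate j false ∧ 2*j ≤ a := by
  obtain ⟨j, rfl, hj⟩ := hP
  simp only [List.length_replicate, len_W3] at hguard hcmp
  simp only [Set.mem_insert_iff, Set.mem_singleton_iff] at hY
  rcases hY with rfl|rfl|rfl|rfl|rfl|rfl
  · -- W1
    have n0 := probe_false (hcmp 0 (by simp [len_W1]; omega)) (g_W1sq 0) (g_W3sq a _)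
    have n1 := probe_false (hcmp 1 (by simp [len_W1]; omega)) (g_W1sq 1) (g_W3sq a _)
    refine ⟨j+1, by simp [W1, List.replicate_succ], by omega⟩
  · -- W2
    exfalso
    have h := transfer (hcmp (a-1) (by rw [len_W2 ha]; omega)) (g_W2sq ha _) (g_W3sq a _)
    have : a-1+2*j = a ∨ a-1+2*j = 2*a+2 := h.mp (by omega)
    omega
  · -- W3 : possible only at j = 0, then guard kills (equal lengths)
    exfalso
    rcases Nat.eq_zero_or_pos j with rfl | hj1
    · have h1 := hguard (by simp)
      rw [len_W3] at h1
      omega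
    · have h := transfer (hcmp a (by rw [len_W3]; omega)) (g_W3sq a _) (g_W3sq a _)
      have : a+2*j = a ∨ a+2*j = 2*a+2 := h.mp (by omega)
      omega
  · -- W4
    exfalso
    rcases Nat.eq_zero_or_pos j with rfl | hj1
    · have h := transfer (hcmp (2*a+1) (by rw [len_W4]; omega)) (g_W4sq a _) (g_W3sq a _)
      have : 2*a+1+2*0 = a ∨ 2*a+1+2*0 = 2*a+2 := h.mp (by omega)
      omega
    · have h := transfer (hcmp a (by rw [len_W4]; omega)) (g_W4sq a _) (g_W3sq a _)
      have : a+2*j = a ∨ a+2*j = 2*a+2 := h.mp (by omega)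
      omega
  · -- W5 : j = 0 via no_V_W34, then guard (|V| ≥ a+2 = |X|)
    exfalso
    rw [W5_eq_V] at hcmp hguard
    rcases Nat.eq_zero_or_pos j with rfl | hj1
    · have h1 := hguard (by simp)
      have := len_V_ge (a := a) (e := b)
      omega
    · exact no_V_W34 ha hj hj1 (by omega : a+1 ≤ a+2)
        (fun d => by rw [show 2*a+(a+2)-a = 2*a+2 by omega]; exact g_W3sq a d) hcmp
  · exfalso
    rw [W6_eq_V] at hcmp hguard
    rcases Nat.eq_zero_or_pos j with rfl | hj1
    · have h1 := hguard (by simp)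
      have := len_V_ge (a := a) (e := b+1)
      omega
    · exact no_V_W34 ha hj hj1 (by omega : a+1 ≤ a+2)
        (fun d => by rw [show 2*a+(a+2)-a = 2*a+2 by omega]; exact g_W3sq a d) hcmp

lemma step_W4 {a b : ℕ} (ha : 1 ≤ a) (s Y : List Bool)
    (hP : ∃ j, s = List.replicate j false ∧ 2*j ≤ a)
    (hY : Y ∈ ({W1, W2 a, W3 a, W4 a, W5 a b, W6 a b} : Set (List Bool)))
    (hguard : s.length = 0 → Y.length < (W4 a).length)
    (hcmp : ∀ d, d < min (2*Y.length) (2*(W4 a).length - 2*s.length) →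
      g (Y ++ Y) d = g (W4 a ++ W4 a) (d + 2*s.length)) :
    ∃ j, Y ++ s = List.replicate j false ∧ 2*j ≤ a := by
  obtain ⟨j, rfl, hj⟩ := hP
  simp only [List.length_replicate, len_W4] at hguard hcmp
  simp only [Set.mem_insert_iff, Set.mem_singleton_iff] at hY
  rcases hY with rfl|rfl|rfl|rfl|rfl|rfl
  · -- W1
    have n0 := probe_false (hcmp 0 (by simp [len_W1]; omega)) (g_W1sq 0) (g_W4sq a _)
    have n1 := probe_false (hcmp 1 (by simp [len_W1]; omega)) (g_W1sq 1) (g_W4sq a _)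
    refine ⟨j+1, by simp [W1, List.replicate_succ], by omega⟩
  · -- W2
    exfalso
    rcases Nat.eq_zero_or_pos j with rfl | hj1
    · have h1 := hguard (by simp)
      rw [len_W2 ha] at h1
      omega
    · have h := transfer (hcmp (a-1) (by rw [len_W2 ha]; omega)) (g_W2sq ha _) (g_W4sq a _)
      have : a-1+2*j = a ∨ a-1+2*j = 2*a+1 := h.mp (by omega)
      omega
  · -- W3
    exfalso
    rcases Nat.eq_zero_or_pos j with rfl | hj1
    · have h1 := hguard (by simp)
      rw [len_W3] at h1
      omega
    · have h := transfer (hcmp a (by rw [len_W3]; omega)) (g_W3sq a _) (g_W4sq a _)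
      have : a+2*j = a ∨ a+2*j = 2*a+1 := h.mp (by omega)
      omega
  · -- W4
    exfalso
    rcases Nat.eq_zero_or_pos j with rfl | hj1
    · have h1 := hguard (by simp)
      rw [len_W4] at h1
      omega
    · have h := transfer (hcmp a (by rw [len_W4]; omega)) (g_W4sq a _) (g_W4sq a _)
      have : a+2*j = a ∨ a+2*j = 2*a+1 := h.mp (by omega)
      omega
  · exfalso
    rw [W5_eq_V] at hcmp hguard
    rcases Nat.eq_zero_or_pos j with rfl | hj1
    · have h1 := hguard (by simp)
      have := len_V_ge (a := a) (e := b)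
      omega
    · exact no_V_W34 ha hj hj1 (by omega : a+1 ≤ a+1)
        (fun d => by rw [show 2*a+(a+1)-a = 2*a+1 by omega]; exact g_W4sq a d) hcmp
  · exfalso
    rw [W6_eq_V] at hcmp hguard
    rcases Nat.eq_zero_or_pos j with rfl | hj1
    · have h1 := hguard (by simp)
      have := len_V_ge (a := a) (e := b+1)
      omega
    · exact no_V_W34 ha hj hj1 (by omega : a+1 ≤ a+1)
        (fun d => by rw [show 2*a+(a+1)-a = 2*a+1 by omega]; exact g_W4sq a d) hcmp
def InvC (a c j k : ℕ) : Prop :=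
  k ≤ c ∧ ((j = 0 ∧ 2*k ≤ c) ∨ (1 ≤ j ∧ 2*j ≤ a+1 ∧ (2*j ≤ a ∨ c ≤ 2*k)))

lemma invc_unpack {a c j k : ℕ} (h : InvC a c j k) :
    k ≤ c ∧ 2*j ≤ a+1 ∧ (2*j ≤ a ∨ c ≤ 2*k) ∧ (j = 0 → 2*k ≤ c) := by
  obtain ⟨hk, h⟩ := h
  rcases h with ⟨rfl, h2⟩ | ⟨h1, h2, h3⟩
  · exact ⟨hk, by omega, by omega, fun _ => h2⟩
  · exact ⟨hk, h2, h3, by omega⟩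

lemma g_eq_false_of {u : List Bool} {d : ℕ} {P : Prop} (h : g u d = true ↔ P) (hn : ¬P) :
    g u d = false := by
  cases hq : g u d
  · rfl
  · exact absurd (h.mp hq) hn

lemma len_blocks (a k : ℕ) : ((List.replicate k (W4 a)).flatten).length = k*(a+1) := by
  induction k with
  | zero => simp
  | succ k ih =>
    rw [List.replicate_succ]
    simp only [List.flatten_cons, List.length_append, ih, len_W4]
    ring

lemma len_state (a j k : ℕ) :
    (List.replicate j false ++ (List.replicate k (W4 a)).flatten).length = j + k*(a+1) := by
  rw [List.length_append, List.length_replicate, len_blocks]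

/-- shared first probe: `d = a` is a one of Y², forcing `j = 0 ∧ 2k < c`. -/
lemma probe_a {a c j k : ℕ} (ha : 1 ≤ a) (hk : k ≤ c) (hj2 : 2*j ≤ a+1)
    (hjor : 2*j ≤ a ∨ c ≤ 2*k)
    (hOa : O2 a c (a + 2*(j + k*(a+1)))) : j = 0 ∧ 2*k < c := by
  have hKC := Hmul (m := a+1) hk
  have e4 : (2*c+2)*(a+1) = 2*(c*(a+1))+2*(a+1) := by ring
  rcases hOa with ⟨i, hi, heq⟩ | ⟨i, hi1, hi2, heq⟩ | heq
  · rcases Nat.eq_zero_or_pos j with rfl | hj1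
    · have h2 : (2*k)*(a+1) + a = i*(a+1) + a := by
        have : (2*k)*(a+1) = 2*(k*(a+1)) := by ring
        omega
      obtain ⟨hik, -⟩ := Hu (le_refl a) (le_refl a) h2
      omega
    · exfalso
      have h2 : (2*k+1)*(a+1) + (2*j-1) = i*(a+1) + a := by
        have : (2*k+1)*(a+1) = 2*(k*(a+1))+(a+1) := by ring
        omega
      obtain ⟨hik, hr⟩ := Hu (by omega) (le_refl a) h2
      rcases hjor with h'|h' <;> omega
  · exfalso
    rcases Nat.eq_zero_or_pos j with rfl | hj1
    · have h2 : (2*k)*(a+1) + a = i*(a+1) + 0 := by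
        have : (2*k)*(a+1) = 2*(k*(a+1)) := by ring
        omega
      obtain ⟨-, hr⟩ := Hu (le_refl a) (by omega) h2
      omega
    · have h2 : (2*k+1)*(a+1) + (2*j-1) = i*(a+1) + 0 := by
        have : (2*k+1)*(a+1) = 2*(k*(a+1))+(a+1) := by ring
        omega
      obtain ⟨-, hr⟩ := Hu (by omega) (by omega) h2
      omega
  · exfalso
    obtain ⟨m, rfl⟩ := Nat.exists_eq_add_of_le hk
    have hM : (k+m)*(a+1) = k*(a+1) + m*(a+1) := by ring
    omega

lemma no_V_V {a c e j k : ℕ} (ha : 1 ≤ a) (hI : InvC a c j k)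
    (hguard : j + k*(a+1) = 0 → (V a e).length < (V a c).length)
    (hcmp : ∀ d, d < min (2*(V a e).length) (2*((c+1)*(a+1)+1) - 2*(j + k*(a+1))) →
      g (V a e ++ V a e) d = g (V a c ++ V a c) (d + 2*(j + k*(a+1)))) : False := by
  obtain ⟨hk, hj2, hjor, hj0⟩ := invc_unpack hI
  have hKC := Hmul (m := a+1) hk
  have e4 : (2*c+2)*(a+1) = 2*(c*(a+1))+2*(a+1) := by ring
  have e4e : (2*e+2)*(a+1) = 2*(e*(a+1))+2*(a+1) := by ring
  have hlenY : (V a e).length = (e+1)*(a+1)+1 := len_V a e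
  have eE : (e+1)*(a+1) = e*(a+1)+(a+1) := by ring
  have eC : (c+1)*(a+1) = c*(a+1)+(a+1) := by ring
  have hsig : j + k*(a+1) < (c+1)*(a+1)+1 := by omega
  rcases Nat.eq_zero_or_pos e with rfl | he1
  · -- e = 0
    have hlenY0 : (V a 0).length = a+2 := by
      rw [len_V]
      have : (0+1)*(a+1) = a+1 := by ring
      omega
    have hn0 : ¬ O2 a 0 0 := by
      rintro (⟨i, hi, h⟩ | ⟨i, hi1, hi2, h⟩ | h)
      · omega
      · have := Hpos (a := a) (show 1 ≤ i by omega); omega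
      · have : (2*0+2)*(a+1) = 2*(a+1) := by ring
        omega
    have hn1 : ¬ O2 a 0 1 := by
      rintro (⟨i, hi, h⟩ | ⟨i, hi1, hi2, h⟩ | h)
      · omega
      · have := Hpos (a := a) (show 1 ≤ i by omega); omega
      · have : (2*0+2)*(a+1) = 2*(a+1) := by ring
        omega
    have n0 : ¬ O2 a c (0 + 2*(j + k*(a+1))) :=
      probe_false (hcmp 0 (by omega)) (g_eq_false_of (g_VV ha 0 0) hn0) (g_VV ha c _)
    have n1 : ¬ O2 a c (1 + 2*(j + k*(a+1))) :=
      probe_false (hcmp 1 (by omega)) (g_eq_false_of (g_VV ha 0 1) hn1) (g_VV ha c _)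
    -- from n0/n1 : 2j ≤ a and not 2j = a+1 etc.
    have hna1 : ¬ (2*j = a+1) := by
      intro h
      have hck : c ≤ 2*k := by rcases hjor with h'|h' <;> omega
      refine n0 (Or.inr (Or.inl ⟨2*k+1, by omega, by omega, ?_⟩))
      have : (2*k+1)*(a+1) = 2*(k*(a+1))+(a+1) := by ring
      omega
    have hna : ¬ (2*j = a) := by
      intro h
      rcases Nat.lt_or_ge (2*k) c with hkc | hkc
      · refine n0 (Or.inl ⟨2*k, hkc, ?_⟩)
        have : (2*k)*(a+1) = 2*(k*(a+1)) := by ring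
        omega
      · refine n1 (Or.inr (Or.inl ⟨2*k+1, by omega, by omega, ?_⟩))
        have : (2*k+1)*(a+1) = 2*(k*(a+1))+(a+1) := by ring
        omega
    -- probe d = a+1 (one of Y²)
    have hOc : O2 a c (a+1 + 2*(j + k*(a+1))) := by
      have h := hcmp (a+1) (by omega)
      have hy : g (V a 0 ++ V a 0) (a+1) = true := by
        rw [g_VV ha 0]
        exact Or.inr (Or.inl ⟨1, by omega, by omega, by omega⟩)
      rw [hy] at h
      exact (g_VV ha c _).mp h.symm
    have hjk : j = 0 ∧ c = 2*k := by
      rcases hOc with ⟨i, hi, heq⟩ | ⟨i, hi1, hi2, heq⟩ | heq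
      · exfalso
        have h2 : (2*k+1)*(a+1) + 2*j = i*(a+1) + a := by
          have : (2*k+1)*(a+1) = 2*(k*(a+1))+(a+1) := by ring
          omega
        obtain ⟨-, hr⟩ := Hu (by omega) (le_refl a) h2
        exact hna hr
      · have h2 : (2*k+1)*(a+1) + 2*j = i*(a+1) + 0 := by
          have : (2*k+1)*(a+1) = 2*(k*(a+1))+(a+1) := by ring
          omega
        obtain ⟨hik, hr⟩ := Hu (by omega) (by omega) h2
        have := hj0 (by omega)
        omega
      · exfalso
        omega
    obtain ⟨rfl, hc2k⟩ := hjk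
    rcases Nat.eq_zero_or_pos k with rfl | hk1
    · have hg := hguard (by omega)
      rw [len_V, len_V] at hg
      have hcc : c = 0 := by omega
      subst hcc
      omega
    · -- probe d = 2a+3 (top one of Y²)
      have hOd : O2 a c (2*a+3 + 2*(0 + k*(a+1))) := by
        have h := hcmp (2*a+3) (by omega)
        have hy : g (V a 0 ++ V a 0) (2*a+3) = true := by
          rw [g_VV ha 0]
          refine Or.inr (Or.inr ?_)
          have : (2*0+2)*(a+1) = 2*(a+1) := by ring
          omega
        rw [hy] at h
        exact (g_VV ha c _).mp h.symm
      rcases hOd with ⟨i, hi, heq⟩ | ⟨i, hi1, hi2, heq⟩ | heq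
      · have h2 : i*(a+1) + a = (2*k+2)*(a+1) + 1 := by
          have : (2*k+2)*(a+1) = 2*(k*(a+1))+2*(a+1) := by ring
          omega
        obtain ⟨hik, hr⟩ := Hu (le_refl a) (by omega) h2
        omega
      · have h2 : i*(a+1) + 0 = (2*k+2)*(a+1) + 1 := by
          have : (2*k+2)*(a+1) = 2*(k*(a+1))+2*(a+1) := by ring
          omega
        obtain ⟨-, hr⟩ := Hu (by omega) (by omega) h2
        omega
      · have h2 : (2*k+2)*(a+1) + 1 = (2*c+2)*(a+1) + 1 := by
          have : (2*k+2)*(a+1) = 2*(k*(a+1))+2*(a+1) := by ring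
          omega
        obtain ⟨hik, -⟩ := Hu (by omega) (by omega) h2
        omega
  · -- e ≥ 1
    have hE1 := Hpos (a := a) he1
    -- probe d = a : one of Y² since e ≥ 1
    have hOa : O2 a c (a + 2*(j + k*(a+1))) := by
      have h := hcmp a (by omega)
      have hy : g (V a e ++ V a e) a = true := by
        rw [g_VV ha e]
        exact Or.inl ⟨0, by omega, by omega⟩
      rw [hy] at h
      exact (g_VV ha c _).mp h.symm
    obtain ⟨rfl, h2kc⟩ := probe_a ha hk hj2 hjor hOa
    simp only [Nat.zero_add] at hcmp hguard
    -- step 2 : c ≤ 2k + e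
    have hce : c ≤ 2*k + e := by
      by_contra hce
      push_neg at hce
      have hlt := Hmul (m := a+1) (show 2*k+e+1 ≤ c by omega)
      have eX : (2*k+e+1)*(a+1) = 2*(k*(a+1))+e*(a+1)+(a+1) := by ring
      have h := hcmp (e*(a+1)+a) (by omega)
      have hx : g (V a c ++ V a c) (e*(a+1)+a + 2*(k*(a+1))) = true := by
        rw [g_VV ha c]
        refine Or.inl ⟨2*k+e, by omega, ?_⟩
        have : (2*k+e)*(a+1) = 2*(k*(a+1))+e*(a+1) := by ring
        omega
      rw [hx] at h
      have hy : O2 a e (e*(a+1)+a) := (g_VV ha e _).mp h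
      rcases hy with ⟨i, hi, heq⟩ | ⟨i, hi1, hi2, heq⟩ | heq
      · have h2 : i*(a+1) + a = e*(a+1) + a := by omega
        obtain ⟨hik, -⟩ := Hu (le_refl a) (le_refl a) h2
        omega
      · have h2 : i*(a+1) + 0 = e*(a+1) + a := by omega
        obtain ⟨-, hr⟩ := Hu (by omega) (le_refl a) h2
        omega
      · omega
    -- step 3 : 2k + e ≤ c
    have hce2 : 2*k + e ≤ c := by
      by_contra hce2
      push_neg at hce2
      obtain ⟨m, rfl⟩ : ∃ m, c = 2*k + m := ⟨c - 2*k, by omega⟩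
      have hm1 : 1 ≤ m := by omega
      have hme : m < e := by omega
      have hMle := Hmul (m := a+1) (show m ≤ e by omega)
      have eM : (2*k+m)*(a+1) = 2*(k*(a+1))+m*(a+1) := by ring
      have h := hcmp (m*(a+1)+a) (by omega)
      have hy : g (V a e ++ V a e) (m*(a+1)+a) = true := by
        rw [g_VV ha e]
        exact Or.inl ⟨m, hme, by omega⟩
      rw [hy] at h
      have hx : O2 a (2*k+m) (m*(a+1)+a + 2*(k*(a+1))) := (g_VV ha _ _).mp h.symm
      rcases hx with ⟨i, hi, heq⟩ | ⟨i, hi1, hi2, heq⟩ | heq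
      · have h2 : i*(a+1) + a = (2*k+m)*(a+1) + a := by omega
        obtain ⟨hik, -⟩ := Hu (le_refl a) (le_refl a) h2
        omega
      · have h2 : i*(a+1) + 0 = (2*k+m)*(a+1) + a := by omega
        obtain ⟨-, hr⟩ := Hu (by omega) (le_refl a) h2
        omega
      · have h2 : (2*(2*k+m)+2)*(a+1) = 2*((2*k+m)*(a+1))+2*(a+1) := by ring
        omega
    have hceq : c = 2*k + e := by omega
    rcases Nat.eq_zero_or_pos k with rfl | hk1
    · have := hguard (by omega)
      rw [len_V, len_V] at this
      have : e < c := by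
        by_contra hec
        push_neg at hec
        have := Hmul (m := a+1) (show c+1 ≤ e+1 by omega)
        omega
      omega
    · -- probe top one of Y² : d = (2e+2)(a+1)+1
      subst hceq
      have eT : (2*e+2*k+2)*(a+1) = 2*(e*(a+1))+2*(k*(a+1))+2*(a+1) := by ring
      have eC2 : (2*k+e)*(a+1) = 2*(k*(a+1))+e*(a+1) := by ring
      have eC4 : (2*(2*k+e)+2)*(a+1) = 4*(k*(a+1))+2*(e*(a+1))+2*(a+1) := by ring
      have h := hcmp ((2*e+2)*(a+1)+1) (by omega)
      have hy : g (V a e ++ V a e) ((2*e+2)*(a+1)+1) = true := by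
        rw [g_VV ha e]
        exact Or.inr (Or.inr rfl)
      rw [hy] at h
      have hx : O2 a (2*k+e) ((2*e+2)*(a+1)+1 + 2*(k*(a+1))) := (g_VV ha _ _).mp h.symm
      rcases hx with ⟨i, hi, heq⟩ | ⟨i, hi1, hi2, heq⟩ | heq
      · have h2 : i*(a+1) + a = (2*e+2*k+2)*(a+1) + 1 := by omega
        obtain ⟨hik, hr⟩ := Hu (le_refl a) (by omega) h2
        omega
      · have h2 : i*(a+1) + 0 = (2*e+2*k+2)*(a+1) + 1 := by omega
        obtain ⟨-, hr⟩ := Hu (by omega) (by omega) h2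
        omega
      · have h2 : (2*e+2*k+2)*(a+1) + 1 = (2*(2*k+e)+2)*(a+1) + 1 := by omega
        obtain ⟨hik, -⟩ := Hu (by omega) (by omega) h2
        omega
lemma shape_W1 (a j k : ℕ) :
    W1 ++ (List.replicate j false ++ (List.replicate k (W4 a)).flatten)
      = List.replicate (j+1) false ++ (List.replicate k (W4 a)).flatten := by
  simp [W1, List.replicate_succ]

lemma shape_W4 (a k : ℕ) :
    W4 a ++ (List.replicate 0 false ++ (List.replicate k (W4 a)).flatten)
      = List.replicate 0 false ++ (List.replicate (k+1) (W4 a)).flatten := by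
  simp [List.replicate_succ]

lemma shape_W3 (a k : ℕ) :
    W3 a ++ (List.replicate 0 false ++ (List.replicate k (W4 a)).flatten)
      = List.replicate 1 false ++ (List.replicate (k+1) (W4 a)).flatten := by
  simp [W3, W4, List.replicate_succ]

lemma shape_W2 {a : ℕ} (ha : 1 ≤ a) (k : ℕ) :
    W2 a ++ (List.replicate 1 false ++ (List.replicate k (W4 a)).flatten)
      = List.replicate 1 false ++ (List.replicate (k+1) (W4 a)).flatten := by
  have h : List.replicate (a-1) false ++ [false] = List.replicate a false := by
    rw [← List.replicate_succ']
    congr 1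
    omega
  simp only [W2, W4, List.replicate_succ, List.flatten_cons, List.replicate_one]
  simp only [List.cons_append, List.append_assoc, List.nil_append]
  rw [← h]
  simp

lemma step_V {a b c : ℕ} (ha : 1 ≤ a) (hb : c = b ∨ c = b + 1) (s Y : List Bool)
    (hP : ∃ j k, s = List.replicate j false ++ (List.replicate k (W4 a)).flatten ∧ InvC a c j k)
    (hY : Y ∈ ({W1, W2 a, W3 a, W4 a, W5 a b, W6 a b} : Set (List Bool)))
    (hguard : s.length = 0 → Y.length < (V a c).length)
    (hcmp : ∀ d, d < min (2*Y.length) (2*(V a c).length - 2*s.length) →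
      g (Y ++ Y) d = g (V a c ++ V a c) (d + 2*s.length)) :
    ∃ j k, Y ++ s = List.replicate j false ++ (List.replicate k (W4 a)).flatten
      ∧ InvC a c j k := by
  obtain ⟨j, k, rfl, hI⟩ := hP
  obtain ⟨hk, hj2, hjor, hj0⟩ := invc_unpack hI
  have hKC := Hmul (m := a+1) hk
  have eC : (c+1)*(a+1) = c*(a+1)+(a+1) := by ring
  have e4 : (2*c+2)*(a+1) = 2*(c*(a+1))+2*(a+1) := by ring
  have hsig : j + k*(a+1) < (c+1)*(a+1)+1 := by omega
  rw [len_state, len_V] at hguard hcmp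
  simp only [Set.mem_insert_iff, Set.mem_singleton_iff] at hY
  have hX2 := g_VV ha c
  rcases hY with rfl|rfl|rfl|rfl|rfl|rfl
  · -- W1
    have n0 : ¬ O2 a c (0 + 2*(j + k*(a+1))) :=
      probe_false (hcmp 0 (by rw [len_W1]; omega)) (g_W1sq 0) (hX2 _)
    have n1 : ¬ O2 a c (1 + 2*(j + k*(a+1))) :=
      probe_false (hcmp 1 (by rw [len_W1]; omega)) (g_W1sq 1) (hX2 _)
    have hna1 : ¬ (2*j = a+1) := by
      intro h
      have hck : c ≤ 2*k := by rcases hjor with h'|h' <;> omega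
      refine n0 (Or.inr (Or.inl ⟨2*k+1, by omega, by omega, ?_⟩))
      have : (2*k+1)*(a+1) = 2*(k*(a+1))+(a+1) := by ring
      omega
    have hna : ¬ (2*j = a) := by
      intro h
      rcases Nat.lt_or_ge (2*k) c with hkc | hkc
      · refine n0 (Or.inl ⟨2*k, hkc, ?_⟩)
        have : (2*k)*(a+1) = 2*(k*(a+1)) := by ring
        omega
      · refine n1 (Or.inr (Or.inl ⟨2*k+1, by omega, by omega, ?_⟩))
        have : (2*k+1)*(a+1) = 2*(k*(a+1))+(a+1) := by ring
        omega
    have hgoal3 : 2*(j+1) ≤ a ∨ c ≤ 2*k := by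
      rcases Nat.lt_or_ge (2*k) c with hkc | hkc
      · left
        have hnb : ¬ (2*j+1 = a) := by
          intro h
          refine n1 (Or.inl ⟨2*k, hkc, ?_⟩)
          have : (2*k)*(a+1) = 2*(k*(a+1)) := by ring
          omega
        omega
      · right
        omega
    exact ⟨j+1, k, shape_W1 a j k, hk, Or.inr ⟨by omega, by omega, hgoal3⟩⟩
  · -- W2
    have hOa : O2 a c (a-1 + 2*(j + k*(a+1))) := by
      have h := hcmp (a-1) (by rw [len_W2 ha]; omega)
      have hy : g (W2 a ++ W2 a) (a-1) = true := (g_W2sq ha _).mpr (by omega)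
      rw [hy] at h
      exact (hX2 _).mp h.symm
    have hjck : j = 1 ∧ c ≤ 2*k := by
      rcases Nat.eq_zero_or_pos j with rfl | hj1
      · exfalso
        rcases hOa with ⟨i, hi, heq⟩ | ⟨i, hi1, hi2, heq⟩ | heq
        · have h2 : (2*k)*(a+1) + (a-1) = i*(a+1) + a := by
            have : (2*k)*(a+1) = 2*(k*(a+1)) := by ring
            omega
          obtain ⟨-, hr⟩ := Hu (by omega) (le_refl a) h2
          omega
        · have h2 : (2*k)*(a+1) + (a-1) = i*(a+1) + 0 := by
            have : (2*k)*(a+1) = 2*(k*(a+1)) := by ring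
            omega
          obtain ⟨hik, hr⟩ := Hu (by omega) (by omega) h2
          have := hj0 rfl
          omega
        · omega
      · rcases hOa with ⟨i, hi, heq⟩ | ⟨i, hi1, hi2, heq⟩ | heq
        · exfalso
          have h2 : (2*k+1)*(a+1) + (2*j-2) = i*(a+1) + a := by
            have : (2*k+1)*(a+1) = 2*(k*(a+1))+(a+1) := by ring
            omega
          obtain ⟨-, hr⟩ := Hu (by omega) (le_refl a) h2
          omega
        · have h2 : (2*k+1)*(a+1) + (2*j-2) = i*(a+1) + 0 := by
            have : (2*k+1)*(a+1) = 2*(k*(a+1))+(a+1) := by ring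
            omega
          obtain ⟨hik, hr⟩ := Hu (by omega) (by omega) h2
          constructor <;> omega
        · exfalso
          have : (2*k+1)*(a+1) = 2*(k*(a+1))+(a+1) := by ring
          omega
    obtain ⟨rfl, hck⟩ := hjck
    have hOb : O2 a c (2*a + 2*(1 + k*(a+1))) := by
      have h := hcmp (2*a) (by rw [len_W2 ha]; omega)
      have hy : g (W2 a ++ W2 a) (2*a) = true := (g_W2sq ha _).mpr (by omega)
      rw [hy] at h
      exact (hX2 _).mp h.symm
    have hkc1 : k+1 ≤ c := by
      rcases hOb with ⟨i, hi, heq⟩ | ⟨i, hi1, hi2, heq⟩ | heq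
      · exfalso
        have h2 : (2*k+2)*(a+1) + 0 = i*(a+1) + a := by
          have : (2*k+2)*(a+1) = 2*(k*(a+1))+2*(a+1) := by ring
          omega
        obtain ⟨-, hr⟩ := Hu (by omega) (le_refl a) h2
        omega
      · have h2 : (2*k+2)*(a+1) + 0 = i*(a+1) + 0 := by
          have : (2*k+2)*(a+1) = 2*(k*(a+1))+2*(a+1) := by ring
          omega
        obtain ⟨hik, -⟩ := Hu (by omega) (by omega) h2
        omega
      · exfalso
        have : (2*k+2)*(a+1) = 2*(k*(a+1))+2*(a+1) := by ring
        omega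
    exact ⟨1, k+1, shape_W2 ha k, hkc1, Or.inr ⟨by omega, by omega, by omega⟩⟩
  · -- W3
    have hOa : O2 a c (a + 2*(j + k*(a+1))) := by
      have h := hcmp a (by rw [len_W3]; omega)
      have hy : g (W3 a ++ W3 a) a = true := (g_W3sq a _).mpr (by omega)
      rw [hy] at h
      exact (hX2 _).mp h.symm
    obtain ⟨rfl, h2kc⟩ := probe_a ha hk hj2 hjor hOa
    have hOb : O2 a c (2*a+2 + 2*(0 + k*(a+1))) := by
      have h := hcmp (2*a+2) (by rw [len_W3]; omega)
      have hy : g (W3 a ++ W3 a) (2*a+2) = true := (g_W3sq a _).mpr (by omega)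
      rw [hy] at h
      exact (hX2 _).mp h.symm
    have hc21 : c ≤ 2*k+1 := by
      rcases hOb with ⟨i, hi, heq⟩ | ⟨i, hi1, hi2, heq⟩ | heq
      · exfalso
        have h2 : (2*k+2)*(a+1) + 0 = i*(a+1) + a := by
          have : (2*k+2)*(a+1) = 2*(k*(a+1))+2*(a+1) := by ring
          omega
        obtain ⟨-, hr⟩ := Hu (by omega) (le_refl a) h2
        omega
      · have h2 : (2*k+2)*(a+1) + 0 = i*(a+1) + 0 := by
          have : (2*k+2)*(a+1) = 2*(k*(a+1))+2*(a+1) := by ring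
          omega
        obtain ⟨hik, -⟩ := Hu (by omega) (by omega) h2
        omega
      · exfalso
        have : (2*k+2)*(a+1) = 2*(k*(a+1))+2*(a+1) := by ring
        omega
    exact ⟨1, k+1, shape_W3 a k, by omega, Or.inr ⟨by omega, by omega, by omega⟩⟩
  · -- W4
    have hOa : O2 a c (a + 2*(j + k*(a+1))) := by
      have h := hcmp a (by rw [len_W4]; omega)
      have hy : g (W4 a ++ W4 a) a = true := (g_W4sq a _).mpr (by omega)
      rw [hy] at h
      exact (hX2 _).mp h.symm
    obtain ⟨rfl, h2kc⟩ := probe_a ha hk hj2 hjor hOa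
    have hOb : O2 a c (2*a+1 + 2*(0 + k*(a+1))) := by
      have h := hcmp (2*a+1) (by rw [len_W4]; omega)
      have hy : g (W4 a ++ W4 a) (2*a+1) = true := (g_W4sq a _).mpr (by omega)
      rw [hy] at h
      exact (hX2 _).mp h.symm
    have hc22 : 2*k+2 ≤ c := by
      rcases hOb with ⟨i, hi, heq⟩ | ⟨i, hi1, hi2, heq⟩ | heq
      · have h2 : (2*k+1)*(a+1) + a = i*(a+1) + a := by
          have : (2*k+1)*(a+1) = 2*(k*(a+1))+(a+1) := by ring
          omega
        obtain ⟨hik, -⟩ := Hu (le_refl a) (le_refl a) h2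
        omega
      · exfalso
        have h2 : (2*k+1)*(a+1) + a = i*(a+1) + 0 := by
          have : (2*k+1)*(a+1) = 2*(k*(a+1))+(a+1) := by ring
          omega
        obtain ⟨-, hr⟩ := Hu (le_refl a) (by omega) h2
        omega
      · exfalso
        have : (2*k+1)*(a+1) = 2*(k*(a+1))+(a+1) := by ring
        omega
    exact ⟨0, k+1, shape_W4 a k, by omega, Or.inl ⟨rfl, by omega⟩⟩
  · -- W5 = V a b
    exfalso
    rw [W5_eq_V] at hcmp hguard
    exact no_V_V ha ⟨hk, hI.2⟩ (fun h0 => by rw [len_V a c]; exact hguard h0) hcmp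
  · -- W6 = V a (b+1)
    exfalso
    rw [W6_eq_V] at hcmp hguard
    exact no_V_V ha ⟨hk, hI.2⟩ (fun h0 => by rw [len_V a c]; exact hguard h0) hcmp
lemma concl_rep_cons2 {j n : ℕ} (x y : Bool) (h : j ≤ n) :
    List.replicate j false <:+ x :: y :: List.replicate n false :=
  suffix_cons_ext x (suffix_cons_ext y (rep_suffix h))

lemma join_rep_add (a m k : ℕ) : (List.replicate (m+k) (W4 a)).flatten
    = (List.replicate m (W4 a)).flatten ++ (List.replicate k (W4 a)).flatten := by
  induction m with
  | zero => simp
  | succ m ih =>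
    rw [show m+1+k = (m+k)+1 by omega, List.replicate_succ, List.replicate_succ]
    simp [ih, List.append_assoc]

lemma concl_V {a c : ℕ} (ha : 1 ≤ a) {s : List Bool}
    (hP : ∃ j k, s = List.replicate j false ++ (List.replicate k (W4 a)).flatten
      ∧ InvC a c j k) :
    s.length < (V a c).length ∧ s <:+ V a c := by
  obtain ⟨j, k, rfl, hI⟩ := hP
  obtain ⟨hk, hj2, hjor, hj0⟩ := invc_unpack hI
  have hKC := Hmul (m := a+1) hk
  have eC : (c+1)*(a+1) = c*(a+1)+(a+1) := by ring
  have hja : j ≤ a := by omega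
  constructor
  · rw [len_state, len_V]
    omega
  · obtain ⟨m, rfl⟩ : ∃ m, c = m + k := ⟨c - k, by omega⟩
    have hJsplit := join_rep_add a m k
    cases m with
    | zero =>
      refine ⟨true :: List.replicate (a+1-j) false, ?_⟩
      have hrep : List.replicate (a+1-j) false ++ List.replicate j false
          = List.replicate (a+1) false := by
        rw [← List.replicate_add]
        congr 1
        omega
      simp only [V, hJsplit]
      simp only [List.cons_append, List.append_assoc]
      rw [← List.append_assoc (List.replicate (a+1-j) false), hrep]
      simp
    | succ m' =>
      refine ⟨(true :: List.replicate (a+1) false) ++ (List.replicate m' (W4 a)).flatten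
        ++ [true] ++ List.replicate (a-j) false, ?_⟩
      have hrep : List.replicate (a-j) false ++ List.replicate j false
          = List.replicate a false := by
        rw [← List.replicate_add]
        congr 1
        omega
      have hJm : (List.replicate (m'+1) (W4 a)).flatten
          = (List.replicate m' (W4 a)).flatten ++ W4 a := by
        rw [List.replicate_succ' (n := m') (a := W4 a)]
        simp
      show _ = (true :: List.replicate (a+1) false) ++ (List.replicate (m'+1+k) (W4 a)).flatten
      rw [hJsplit, hJm]
      simp only [W4, ← hrep]
      simp [List.append_assoc]
      rw [← List.append_assoc, ← List.replicate_add]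

lemma concl_W2 {a : ℕ} (ha : 1 ≤ a) {s : List Bool}
    (hP : ∃ j, s = List.replicate j false ∧ 2*j+1 ≤ a) :
    s.length < (W2 a).length ∧ s <:+ W2 a := by
  obtain ⟨j, rfl, hj⟩ := hP
  refine ⟨by rw [len_W2 ha]; simp; omega, ?_⟩
  unfold W2
  exact concl_rep_cons2 false true (by omega)

lemma concl_W3 {a : ℕ} (ha : 1 ≤ a) {s : List Bool}
    (hP : ∃ j, s = List.replicate j false ∧ 2*j ≤ a) :
    s.length < (W3 a).length ∧ s <:+ W3 a := by
  obtain ⟨j, rfl, hj⟩ := hP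
  refine ⟨by rw [len_W3]; simp; omega, ?_⟩
  unfold W3
  exact concl_rep_cons2 false true (by omega)

lemma concl_W4 {a : ℕ} (ha : 1 ≤ a) {s : List Bool}
    (hP : ∃ j, s = List.replicate j false ∧ 2*j ≤ a) :
    s.length < (W4 a).length ∧ s <:+ W4 a := by
  obtain ⟨j, rfl, hj⟩ := hP
  refine ⟨by rw [len_W4]; simp; omega, ?_⟩
  unfold W4
  exact suffix_cons_ext true (rep_suffix (by omega))

lemma word_len_pos {a b : ℕ} {Y : List Bool}
    (hY : Y ∈ ({W1, W2 a, W3 a, W4 a, W5 a b, W6 a b} : Set (List Bool))) :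
    1 ≤ Y.length := List.length_pos_iff.mpr (word_ne_nil hY)

theorem backtracking_lemma (a b : ℕ) (ha : 1 ≤ a)
    (X : List Bool) (Ys : List (List Bool)) (hYs : Ys ≠ []) (w : List Bool)
    (hX : X ∈ ({W1, W2 a, W3 a, W4 a, W5 a b, W6 a b} : Set (List Bool)))
    (hY : ∀ Y ∈ Ys, Y ∈ ({W1, W2 a, W3 a, W4 a, W5 a b, W6 a b} : Set (List Bool)))
    (h1 : (X ++ X) <:+ w)
    (h2 : (Ys.map fun Y => Y ++ Y).flatten <:+ w)
    (h3 : (Ys.getLast hYs).length < X.length) :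
    Ys.flatten.length < X.length ∧ Ys.flatten <:+ X := by
  simp only [Set.mem_insert_iff, Set.mem_singleton_iff] at hX
  rcases hX with rfl|rfl|rfl|rfl|rfl|rfl
  · -- X = W1 : impossible since |Y_n| ≥ 1
    exfalso
    have := word_len_pos (hY _ (List.getLast_mem hYs))
    rw [len_W1] at h3
    omega
  · have hP := core h1 (fun s => ∃ j, s = List.replicate j false ∧ 2*j+1 ≤ a)
      ⟨0, by simp, by omega⟩ (fun s hs => concl_W2 ha hs)
      (fun s Y hs hYm hg hc => step_W2 ha s Y hs hYm
        (fun h0 => hg (by omega)) hc) Ys hY h2 (fun _ => h3)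
    exact concl_W2 ha hP
  · have hP := core h1 (fun s => ∃ j, s = List.replicate j false ∧ 2*j ≤ a)
      ⟨0, by simp, by omega⟩ (fun s hs => concl_W3 ha hs)
      (fun s Y hs hYm hg hc => step_W3 ha s Y hs hYm
        (fun h0 => hg (by omega)) hc) Ys hY h2 (fun _ => h3)
    exact concl_W3 ha hP
  · have hP := core h1 (fun s => ∃ j, s = List.replicate j false ∧ 2*j ≤ a)
      ⟨0, by simp, by omega⟩ (fun s hs => concl_W4 ha hs)
      (fun s Y hs hYm hg hc => step_W4 ha s Y hs hYm
        (fun h0 => hg (by omega)) hc) Ys hY h2 (fun _ => h3)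
    exact concl_W4 ha hP
  · rw [W5_eq_V] at h1 h3 ⊢
    have hP := core h1 (fun s => ∃ j k, s = List.replicate j false
        ++ (List.replicate k (W4 a)).flatten ∧ InvC a b j k)
      ⟨0, 0, by simp, by exact ⟨by omega, Or.inl ⟨rfl, by omega⟩⟩⟩
      (fun s hs => concl_V ha hs)
      (fun s Y hs hYm hg hc => step_V ha (Or.inl rfl) s Y hs hYm
        (fun h0 => hg (by omega)) hc) Ys hY h2 (fun _ => h3)
    exact concl_V ha hP
  · rw [W6_eq_V] at h1 h3 ⊢
    have hP := core h1 (fun s => ∃ j k, s = List.replicate j false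
        ++ (List.replicate k (W4 a)).flatten ∧ InvC a (b+1) j k)
      ⟨0, 0, by simp, by exact ⟨by omega, Or.inl ⟨rfl, by omega⟩⟩⟩
      (fun s hs => concl_V ha hs)
      (fun s Y hs hYm hg hc => step_V ha (Or.inr rfl) s Y hs hYm
        (fun h0 => hg (by omega)) hc) Ys hY h2 (fun _ => h3)
    exact concl_V ha hP
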